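/- (Geršgorin-based rotor-angle stability) Suppose the real N×N matrix M defined by M_{j,ℓ} = −w_{j,ℓ} for j ≠ ℓ and M_{j,j} = ∑_{k≠j} w_{j,k}, where w_{j,ℓ} = B_{j,ℓ}cos(δ_ℓ − δ_j) + G_{j,ℓ}sin(δ_ℓ − δ_j) (note w_{j,ℓ} need not equal w_{ℓ,j}), satisfies w_{j,ℓ} > 0 for all edges (j,ℓ) and w_{j,ℓ} = 0 for non-edges of a connected graph. Then every eigenvalue λ of M has Re(λ) ≥ 0, and the zero-eigenspace is spanned by the all-ones vector. -/

import Mathlib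

open Matrix

/-- Geršgorin-based rotor-angle stability: for the (possibly non-symmetric) Laplacian `M`
built from edge weights `w j ℓ = B j ℓ cos(δ ℓ - δ j) + G j ℓ sin(δ ℓ - δ j)` which are
positive on the edges of a connected graph and zero on non-edges, every eigenvalue of `M`
has nonnegative real part, and the zero-eigenspace is spanned by the all-ones vector. -/
theorem stmt_7 (N : ℕ) (δ : Fin N → ℝ) (B G : Matrix (Fin N) (Fin N) ℝ)
    (hBsymm : Bᵀ = B) (hGsymm : Gᵀ = G)
    (hBnn : ∀ j ℓ, j ≠ ℓ → 0 ≤ B j ℓ)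
    (Gr : SimpleGraph (Fin N)) (hconn : Gr.Connected)
    (w : Fin N → Fin N → ℝ)
    (hw : ∀ j ℓ, w j ℓ = B j ℓ * Real.cos (δ ℓ - δ j) + G j ℓ * Real.sin (δ ℓ - δ j))
    (hedge : ∀ j ℓ, Gr.Adj j ℓ ↔ (j ≠ ℓ ∧ (B j ℓ ≠ 0 ∨ G j ℓ ≠ 0)))
    (hwpos : ∀ j ℓ, Gr.Adj j ℓ → 0 < w j ℓ)
    (M : Matrix (Fin N) (Fin N) ℝ)
    (hM : ∀ j ℓ, M j ℓ =
      if j = ℓ then ∑ k ∈ Finset.univ.filter (· ≠ j), w j k else - w j ℓ) :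
    (∀ (lam : ℂ) (v : Fin N → ℂ), v ≠ 0 →
        (M.map Complex.ofReal).mulVec v = lam • v → 0 ≤ lam.re) ∧
    (∀ x : Fin N → ℝ, M.mulVec x = 0 ↔ ∃ c : ℝ, x = fun _ => c) := by
  -- w is nonnegative off the diagonal
  have hwnn : ∀ j ℓ, j ≠ ℓ → 0 ≤ w j ℓ := by
    intro j ℓ hjl
    by_cases h : Gr.Adj j ℓ
    · exact (hwpos j ℓ h).le
    · rw [hedge] at h
      push_neg at h
      obtain ⟨hB0, hG0⟩ := h hjl
      rw [hw, hB0, hG0]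
      simp
  -- diagonal entries are nonnegative
  have hdiag : ∀ j, 0 ≤ M j j := by
    intro j
    rw [hM j j, if_pos rfl]
    refine Finset.sum_nonneg ?_
    intro k hk
    simp only [Finset.mem_filter] at hk
    exact hwnn j k (Ne.symm hk.2)
  -- real row identity
  have hrow : ∀ (x : Fin N → ℝ) (i : Fin N),
      M.mulVec x i = ∑ k ∈ Finset.univ.filter (· ≠ i), w i k * (x i - x k) := by
    intro x i
    have hsplit : M.mulVec x i
        = (∑ k ∈ Finset.univ.filter (· ≠ i), M i k * x k) + M i i * x i := by
      simp only [mulVec, dotProduct]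
      rw [← Finset.sum_filter_add_sum_filter_not Finset.univ (· ≠ i)]
      congr 1
      have : Finset.univ.filter (fun k : Fin N => ¬ k ≠ i) = {i} := by
        ext k; simp [eq_comm]
      rw [this, Finset.sum_singleton]
    rw [hsplit, hM i i, if_pos rfl, Finset.sum_mul]
    rw [← Finset.sum_add_distrib]
    refine Finset.sum_congr rfl ?_
    intro k hk
    simp only [Finset.mem_filter] at hk
    rw [hM i k, if_neg (Ne.symm hk.2)]
    ring
  constructor
  · -- Geršgorin part
    intro lam v hv hev
    have hN : Finset.Nonempty (Finset.univ : Finset (Fin N)) := by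
      rcases hconn.nonempty with ⟨i⟩
      exact ⟨i, Finset.mem_univ i⟩
    obtain ⟨j, -, hj⟩ := Finset.exists_max_image Finset.univ (fun i => ‖v i‖) hN
    have hvj : 0 < ‖v j‖ := by
      rcases (norm_nonneg (v j)).lt_or_eq with h | h
      · exact h
      · exfalso; apply hv; funext i
        have := hj i (Finset.mem_univ i)
        rw [← h] at this
        exact norm_eq_zero.mp (le_antisymm this (norm_nonneg _))
    set d : ℝ := M j j with hd
    -- row identity at j
    have hevj : (∑ k, (M j k : ℂ) * v k) = lam * v j := by
      have := congrFun hev j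
      simpa [mulVec, dotProduct, map_apply, Pi.smul_apply, smul_eq_mul] using this
    have hsplit : (∑ k, (M j k : ℂ) * v k)
        = (∑ k ∈ Finset.univ.filter (· ≠ j), (M j k : ℂ) * v k) + (d : ℂ) * v j := by
      rw [← Finset.sum_filter_add_sum_filter_not Finset.univ (· ≠ j)]
      congr 1
      have : Finset.univ.filter (fun k : Fin N => ¬ k ≠ j) = {j} := by
        ext k; simp [eq_comm]
      rw [this, Finset.sum_singleton]
    have key : (lam - (d : ℂ)) * v j = ∑ k ∈ Finset.univ.filter (· ≠ j), (M j k : ℂ) * v k := by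
      rw [sub_mul]
      rw [hsplit] at hevj
      linear_combination -hevj
    -- bound
    have hb : ‖lam - (d : ℂ)‖ * ‖v j‖ ≤ d * ‖v j‖ := by
      rw [← norm_mul, key]
      calc ‖∑ k ∈ Finset.univ.filter (· ≠ j), (M j k : ℂ) * v k‖
          ≤ ∑ k ∈ Finset.univ.filter (· ≠ j), ‖(M j k : ℂ) * v k‖ :=
            norm_sum_le _ _
        _ ≤ ∑ k ∈ Finset.univ.filter (· ≠ j), w j k * ‖v j‖ := by
            refine Finset.sum_le_sum ?_
            intro k hk
            simp only [Finset.mem_filter] at hk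
            rw [norm_mul, hM j k, if_neg (Ne.symm hk.2)]
            have h1 : ‖((- w j k : ℝ) : ℂ)‖ = w j k := by
              rw [Complex.norm_real, Real.norm_eq_abs, abs_neg, abs_of_nonneg (hwnn j k (Ne.symm hk.2))]
            rw [h1]
            exact mul_le_mul_of_nonneg_left (hj k (Finset.mem_univ k))
              (hwnn j k (Ne.symm hk.2))
        _ = d * ‖v j‖ := by
            rw [hd, hM j j, if_pos rfl, Finset.sum_mul]
    have hb2 : ‖lam - (d : ℂ)‖ ≤ d :=
      le_of_mul_le_mul_right hb hvj
    have h1 : -(‖lam - (d : ℂ)‖) ≤ (lam - (d : ℂ)).re := by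
      have := Complex.abs_re_le_norm (lam - (d : ℂ))
      cases abs_cases (lam - (d : ℂ)).re with
      | inl h => linarith [h.1, norm_nonneg (lam - (d : ℂ)), this]
      | inr h => linarith [h.1, this]
    have h2 : (lam - (d : ℂ)).re = lam.re - d := by simp
    linarith
  · -- kernel part
    intro x
    constructor
    · intro hx
      have hN : Finset.Nonempty (Finset.univ : Finset (Fin N)) := by
        rcases hconn.nonempty with ⟨i⟩
        exact ⟨i, Finset.mem_univ i⟩
      obtain ⟨j, -, hj⟩ := Finset.exists_max_image Finset.univ x hN
      -- adjacency preserves attaining the maximum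
      have key : ∀ a b, Gr.Adj a b → x a = x j → x b = x j := by
        intro a b hab ha
        have h0 : (∑ k ∈ Finset.univ.filter (· ≠ a), w a k * (x a - x k)) = 0 := by
          rw [← hrow x a, hx]; rfl
        have hnn : ∀ k ∈ Finset.univ.filter (· ≠ a), 0 ≤ w a k * (x a - x k) := by
          intro k hk
          simp only [Finset.mem_filter] at hk
          refine mul_nonneg (hwnn a k (Ne.symm hk.2)) ?_
          rw [ha]
          linarith [hj k (Finset.mem_univ k)]
        have hb : b ∈ Finset.univ.filter (· ≠ a) := by
          simp [Finset.mem_filter, (Gr.ne_of_adj hab).symm]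
        have := (Finset.sum_eq_zero_iff_of_nonneg hnn).mp h0 b hb
        have hwab := hwpos a b hab
        have : x a - x b = 0 := by
          rcases mul_eq_zero.mp this with h | h
          · exact absurd h (ne_of_gt hwab)
          · exact h
        rw [← ha]; linarith
      have hwalk : ∀ (a i : Fin N) (p : Gr.Walk a i), x a = x j → x i = x j := by
        intro a i p
        induction p with
        | nil => exact id
        | cons h p ih => intro ha; exact ih (key _ _ h ha)
      refine ⟨x j, funext fun i => ?_⟩
      obtain ⟨p⟩ := hconn.preconnected j i
      exact hwalk j i p rfl
    · rintro ⟨c, rfl⟩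
      funext i
      rw [Pi.zero_apply, hrow]
      simp
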